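/- Let N, n be positive integers, let u0 ∈ ℝ^N, let V ∈ ℝ^{N×n}, let Θ ∈ ℝ^{N×N} be a symmetric positive definite matrix, and let r : ℝ^N → ℝ^N be differentiable with Jacobian J(u) at each u. Define f : ℝ^n → ℝ by f(x) = r(u0 + V x)ᵀ Θ r(u0 + V x) (the squared Θ-norm of the residual). Then x* ∈ ℝ^n is a stationary point of f (i.e., ∇f(x*) = 0) if and only if x* solves the Petrov–Galerkin reduced-order equations Wᵀ r(u0 + V x*) = 0 with left reduced-order basis W = Θ J(u0 + V x*) V. -/

import Mathlib

open Matrix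

noncomputable def quadCLM (N : ℕ) (Θ : Matrix (Fin N) (Fin N) ℝ) :
    (Fin N → ℝ) →L[ℝ] (Fin N → ℝ) →L[ℝ] ℝ :=
  LinearMap.toContinuousLinearMap
    { toFun := fun a => LinearMap.toContinuousLinearMap
        { toFun := fun b => a ⬝ᵥ Θ.mulVec b
          map_add' := by intros; simp [Matrix.mulVec_add, dotProduct_add]
          map_smul' := by intros; simp [Matrix.mulVec_smul, dotProduct_smul] }
      map_add' := by
        intros a b; ext c; simp [add_dotProduct]
      map_smul' := by
        intros m a; ext c; simp [smul_dotProduct] }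

@[simp] lemma quadCLM_apply (N : ℕ) (Θ : Matrix (Fin N) (Fin N) ℝ)
    (a b : Fin N → ℝ) : quadCLM N Θ a b = a ⬝ᵥ Θ.mulVec b := rfl

/-- For SPD `Θ` and `f(x) = ‖r(u0 + V x)‖²_Θ`, a point `x*` is a stationary point of `f`
(`∇f(x*) = 0`, i.e. `fderiv ℝ f x* = 0`) iff it solves the Petrov–Galerkin reduced-order
equations `Wᵀ r(u0 + V x*) = 0` with left ROB `W = Θ J(u0 + V x*) V`. -/
theorem stmt_1 (N n : ℕ) (hN : 0 < N) (hn : 0 < n)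
    (u0 : Fin N → ℝ) (V : Matrix (Fin N) (Fin n) ℝ)
    (Θ : Matrix (Fin N) (Fin N) ℝ) (hΘ : Θ.PosDef)
    (r : (Fin N → ℝ) → (Fin N → ℝ))
    (J : (Fin N → ℝ) → Matrix (Fin N) (Fin N) ℝ)
    (hr : ∀ u, HasFDerivAt r (LinearMap.toContinuousLinearMap (J u).mulVecLin) u)
    (f : (Fin n → ℝ) → ℝ)
    (hf : ∀ x, f x = r (u0 + V.mulVec x) ⬝ᵥ Θ.mulVec (r (u0 + V.mulVec x)))
    (x : Fin n → ℝ) :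
    fderiv ℝ f x = 0 ↔
      (Θ * J (u0 + V.mulVec x) * V)ᵀ.mulVec (r (u0 + V.mulVec x)) = 0 := by
  set u : Fin N → ℝ := u0 + V.mulVec x with hu
  set g : (Fin n → ℝ) → (Fin N → ℝ) := fun y => r (u0 + V.mulVec y) with hg
  set G : (Fin n → ℝ) →L[ℝ] (Fin N → ℝ) :=
    LinearMap.toContinuousLinearMap (J u * V).mulVecLin with hG
  have hΘsymm : Θᵀ = Θ := by
    have := hΘ.isHermitian
    simpa [Matrix.IsHermitian, Matrix.conjTranspose_eq_transpose_of_trivial] using this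
  -- derivative of the affine map
  have haff : HasFDerivAt (fun y => u0 + V.mulVec y)
      (LinearMap.toContinuousLinearMap V.mulVecLin) x := by
    have hlin : HasFDerivAt (fun y => V.mulVec y)
        (LinearMap.toContinuousLinearMap V.mulVecLin) x :=
      (LinearMap.toContinuousLinearMap V.mulVecLin).hasFDerivAt
    simpa using hlin.const_add u0
  have hgd : HasFDerivAt g G x := by
    have := (hr u).comp x haff
    have heq : ((LinearMap.toContinuousLinearMap (J u).mulVecLin).comp
        (LinearMap.toContinuousLinearMap V.mulVecLin)) = G := by
      ext1 h
      simp [hG, Matrix.mulVec_mulVec]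
    rw [← heq]
    exact this
  set B := quadCLM N Θ with hB
  set L : (Fin n → ℝ) →L[ℝ] ℝ := (B (g x)).comp G + (B.comp G).flip (g x) with hL
  have hfd : HasFDerivAt f L x := by
    have hc : HasFDerivAt (fun y => B (g y)) (B.comp G) x :=
      (B.hasFDerivAt).comp x hgd
    have := hc.clm_apply hgd
    have hfe : f = fun y => B (g y) (g y) := by
      funext y; simp [hf y, hg, hB]
    rw [hfe]
    exact this
  have hgx : g x = r u := by simp [hg, hu]
  set w : Fin n → ℝ := (Θ * J u * V)ᵀ.mulVec (r u) with hw
  have key : ∀ h : Fin n → ℝ, L h = 2 * (h ⬝ᵥ w) := by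
    intro h
    have hGh : G h = (J u * V).mulVec h := rfl
    have e1 : g x ⬝ᵥ Θ.mulVec (G h) = G h ⬝ᵥ Θ.mulVec (g x) := by
      rw [Matrix.dotProduct_mulVec, ← Matrix.mulVec_transpose, hΘsymm, dotProduct_comm]
    have e2 : G h ⬝ᵥ Θ.mulVec (g x) = h ⬝ᵥ w := by
      rw [hGh, hgx, dotProduct_comm, Matrix.dotProduct_mulVec, dotProduct_comm,
        ← Matrix.mulVec_transpose, hw, Matrix.mulVec_mulVec]
      congr 1
      simp [Matrix.transpose_mul, hΘsymm, Matrix.mul_assoc]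
    simp only [hL, ContinuousLinearMap.add_apply, ContinuousLinearMap.comp_apply,
      ContinuousLinearMap.flip_apply, quadCLM_apply, hB]
    rw [e1, e2]
    ring
  rw [hfd.fderiv]
  constructor
  · intro h0
    funext i
    show w i = 0
    have h2 : 2 * (Pi.single i 1 ⬝ᵥ w) = 0 := by
      rw [← key (Pi.single i 1), h0]; rfl
    have h3 : Pi.single i 1 ⬝ᵥ w = w i := by
      rw [single_dotProduct, one_mul]
    rw [h3] at h2
    linarith
  · intro h0
    ext h
    simp [key h, h0]
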